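/- Let v¹,…,vⁿ be an orthonormal basis of ℝⁿ, let α₁,…,αₙ > 0, λ ∈ [0,1], and define E_λ = {x ∈ ℝⁿ : ∑ᵢ ⟨x,vⁱ⟩²/αᵢ^(2λ) ≤ 1}. Then for any c₀, c₁ ∈ ℝⁿ, E_λ + (1-λ)c₀ + λc₁ ⊆ (1-λ)(E_0 + c₀) + λ(E_1 + c₁), where the right-hand side is a Minkowski combination. -/

import Mathlib

open scoped RealInnerProductSpace Pointwise

/-- The geometric mean ellipsoid `E_l` with principal axes `v i` and half-lengths `(α i)^l`. -/
def meanEllipsoid {n : ℕ} (v : Fin n → EuclideanSpace ℝ (Fin n)) (α : Fin n → ℝ) (l : ℝ) :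
    Set (EuclideanSpace ℝ (Fin n)) :=
  {x | ∑ i, ⟪x, v i⟫ ^ 2 / (α i) ^ (2 * l) ≤ 1}

theorem stmt_8 {n : ℕ} (v : Fin n → EuclideanSpace ℝ (Fin n))
    (hv : Orthonormal ℝ v) (hv' : Submodule.span ℝ (Set.range v) = ⊤)
    (α : Fin n → ℝ) (hα : ∀ i, 0 < α i) (l : ℝ) (hl : l ∈ Set.Icc (0:ℝ) 1)
    (c₀ c₁ : EuclideanSpace ℝ (Fin n)) :
    meanEllipsoid v α l + ({(1 - l) • c₀ + l • c₁} : Set (EuclideanSpace ℝ (Fin n))) ⊆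
      (1 - l) • (meanEllipsoid v α 0 + ({c₀} : Set (EuclideanSpace ℝ (Fin n)))) + l • (meanEllipsoid v α 1 + ({c₁} : Set (EuclideanSpace ℝ (Fin n)))) := by
  obtain ⟨hl0, hl1⟩ := hl
  rintro z ⟨x, hx, c, rfl, rfl⟩
  simp only [meanEllipsoid, Set.mem_setOf_eq] at hx
  set β : Fin n → ℝ := fun i => ⟪x, v i⟫ with hβ
  set D : Fin n → ℝ := fun i => (1 - l) * (α i) ^ (-l) + l * (α i) ^ (1 - l) with hD
  have hD1 : ∀ i, 1 ≤ D i := by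
    intro i
    have hgm : (α i) ^ l ≤ (1 - l) + l * α i := by
      have := Real.geom_mean_le_arith_mean2_weighted (by linarith : (0:ℝ) ≤ 1 - l) hl0
        zero_le_one (hα i).le (by ring)
      simpa using this
    have hpos : (0:ℝ) < (α i) ^ (-l) := Real.rpow_pos_of_pos (hα i) _
    have : (α i) ^ (-l) * (α i) ^ l ≤ (α i) ^ (-l) * ((1 - l) + l * α i) := by
      exact mul_le_mul_of_nonneg_left hgm hpos.le
    rw [← Real.rpow_add (hα i)] at this
    simp only [neg_add_cancel, Real.rpow_zero] at this
    calc (1:ℝ) ≤ (α i) ^ (-l) * ((1 - l) + l * α i) := this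
      _ = D i := by
          rw [hD]
          have : (α i) ^ (1 - l) = α i * (α i) ^ (-l) := by
            rw [show (1 - l : ℝ) = 1 + (-l) by ring, Real.rpow_add (hα i), Real.rpow_one]
          simp only []
          rw [this]; ring
  have hDpos : ∀ i, 0 < D i := fun i => lt_of_lt_of_le one_pos (hD1 i)
  -- coordinates
  set s : Fin n → ℝ := fun i => (α i) ^ (-l) / D i with hs
  set t : Fin n → ℝ := fun i => (α i) ^ (1 - l) / D i with ht
  set y₀ : EuclideanSpace ℝ (Fin n) := ∑ i, (β i * s i) • v i with hy₀
  set y₁ : EuclideanSpace ℝ (Fin n) := ∑ i, (β i * t i) • v i with hy₁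
  have hcoord : ∀ (c : Fin n → ℝ) (j : Fin n), ⟪∑ i, c i • v i, v j⟫ = c j := by
    intro c j
    rw [sum_inner]
    have : ∀ i, ⟪c i • v i, v j⟫ = c i * (if i = j then (1:ℝ) else 0) := by
      intro i
      rw [real_inner_smul_left, orthonormal_iff_ite.mp hv]
    simp only [this, mul_ite, mul_one, mul_zero, Finset.sum_ite_eq', Finset.mem_univ, if_true]
  -- key: each term bound
  have hterm : ∀ i, β i ^ 2 / (α i) ^ (2 * l) = β i ^ 2 * (α i) ^ (-(2*l)) := by
    intro i
    rw [Real.rpow_neg (hα i).le, div_eq_mul_inv]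
  have hy₀mem : y₀ ∈ meanEllipsoid v α 0 := by
    simp only [meanEllipsoid, Set.mem_setOf_eq, hy₀, hcoord]
    calc ∑ i, (β i * s i) ^ 2 / (α i) ^ (2 * (0:ℝ))
        = ∑ i, (β i * s i) ^ 2 := by simp
      _ ≤ ∑ i, β i ^ 2 / (α i) ^ (2 * l) := by
          apply Finset.sum_le_sum
          intro i _
          rw [hterm i, mul_pow]
          have hs2 : s i ^ 2 ≤ (α i) ^ (-(2*l)) := by
            have h1 : ((α i) ^ (-l)) ^ 2 = (α i) ^ (-(2*l)) := by
              rw [sq, ← Real.rpow_add (hα i)]; ring_nf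
            have hle : s i ≤ (α i) ^ (-l) := by
              rw [hs]
              exact div_le_self (Real.rpow_pos_of_pos (hα i) _).le (hD1 i)
            have hspos : 0 ≤ s i := div_nonneg (Real.rpow_pos_of_pos (hα i) _).le (hDpos i).le
            calc s i ^ 2 ≤ ((α i) ^ (-l)) ^ 2 := by nlinarith
              _ = _ := h1
          have := mul_le_mul_of_nonneg_left hs2 (sq_nonneg (β i))
          exact this
      _ ≤ 1 := hx
  have hy₁mem : y₁ ∈ meanEllipsoid v α 1 := by
    simp only [meanEllipsoid, Set.mem_setOf_eq, hy₁, hcoord]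
    calc ∑ i, (β i * t i) ^ 2 / (α i) ^ (2 * (1:ℝ))
        ≤ ∑ i, β i ^ 2 / (α i) ^ (2 * l) := by
          apply Finset.sum_le_sum
          intro i _
          rw [hterm i, mul_pow]
          have hA2 : (0:ℝ) < (α i) ^ (2 * (1:ℝ)) := Real.rpow_pos_of_pos (hα i) _
          rw [div_le_iff₀ hA2]
          have ht2 : t i ^ 2 ≤ (α i) ^ (2 - 2*l) := by
            have h1 : ((α i) ^ (1 - l)) ^ 2 = (α i) ^ (2 - 2*l) := by
              rw [sq, ← Real.rpow_add (hα i)]; ring_nf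
            have hle : t i ≤ (α i) ^ (1 - l) := by
              rw [ht]
              exact div_le_self (Real.rpow_pos_of_pos (hα i) _).le (hD1 i)
            have htpos : 0 ≤ t i := div_nonneg (Real.rpow_pos_of_pos (hα i) _).le (hDpos i).le
            calc t i ^ 2 ≤ ((α i) ^ (1 - l)) ^ 2 := by nlinarith
              _ = _ := h1
          calc β i ^ 2 * t i ^ 2 ≤ β i ^ 2 * (α i) ^ (2 - 2*l) := by nlinarith [sq_nonneg (β i)]
            _ = β i ^ 2 * (α i) ^ (-(2*l)) * (α i) ^ (2 * (1:ℝ)) := by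
                rw [mul_assoc, ← Real.rpow_add (hα i)]; ring_nf
      _ ≤ 1 := hx
  -- decomposition
  have hxdecomp : x = (1 - l) • y₀ + l • y₁ := by
    let b : OrthonormalBasis (Fin n) ℝ (EuclideanSpace ℝ (Fin n)) :=
      OrthonormalBasis.mk hv (le_of_eq hv'.symm)
    have hb : ∀ i, b i = v i := fun i => by simp [b, OrthonormalBasis.coe_mk]
    have hxsum : ∑ i, β i • v i = x := by
      have := b.sum_repr' x
      simp only [hb, real_inner_comm] at this
      exact this
    rw [hy₀, hy₁, Finset.smul_sum, Finset.smul_sum, ← Finset.sum_add_distrib, ← hxsum]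
    apply Finset.sum_congr rfl
    intro i _
    rw [smul_smul, smul_smul, ← add_smul]
    congr 1
    have : (1 - l) * s i + l * t i = 1 := by
      have hne : D i ≠ 0 := (hDpos i).ne'
      have h2 : (1 - l) * s i + l * t i = D i / D i := by
        simp only [hs, ht, hD]; ring
      rw [h2, div_self hne]
    calc β i = β i * ((1 - l) * s i + l * t i) := by rw [this, mul_one]
      _ = (1 - l) * (β i * s i) + l * (β i * t i) := by ring
  refine ⟨(1 - l) • (y₀ + c₀), ?_, l • (y₁ + c₁), ?_, ?_⟩
  · exact Set.smul_mem_smul_set ⟨y₀, hy₀mem, c₀, rfl, rfl⟩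
  · exact Set.smul_mem_smul_set ⟨y₁, hy₁mem, c₁, rfl, rfl⟩
  · rw [smul_add, smul_add]
    rw [hxdecomp]
    module
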